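/- Let α ∈ (1, 2). For every x ∈ ℝ, ∫₀^∞ (1 − cos(λ x))/λ^α dλ = −Γ(1 − α) · sin(π α / 2) · |x|^{α − 1}, where Γ is the Gamma function. (Via the integral representation of the renormalized zero resolvent with Ψ(λ) proportional to |λ|^α, this gives h(x) proportional to |x|^{α−1} for the symmetric strictly α-stable process.) -/

import Mathlib

open MeasureTheory Real

open Set in
-- real beta special value
lemma beta01 {c : ℝ} (hc0 : 0 < c) (hc1 : c < 1) :
    ∫ t in (0:ℝ)..1, t ^ (c - 1) * (1 - t) ^ (-c) = π / Real.sin (π * c) := by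
  have hB : Complex.betaIntegral c (1 - c) = ↑(π / Real.sin (π * c)) := by
    have h1 : Complex.Gamma c * Complex.Gamma (1 - c)
        = Complex.Gamma (c + (1 - c)) * Complex.betaIntegral c (1 - c) :=
      Complex.Gamma_mul_Gamma_eq_betaIntegral (by simpa using hc0)
        (by simp [Complex.sub_re]; simpa using hc1)
    rw [add_sub_cancel, Complex.Gamma_one, one_mul] at h1
    rw [← h1]
    have h2 := Real.Gamma_mul_Gamma_one_sub c
    push_cast [← Complex.Gamma_ofReal, ← h2]
    norm_num
  have heq : ∀ t ∈ Set.uIcc (0:ℝ) 1,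
      ((t:ℂ) ^ ((c:ℂ) - 1) * (1 - (t:ℂ)) ^ ((1 - (c:ℂ)) - 1))
        = ((t ^ (c - 1) * (1 - t) ^ (-c) : ℝ) : ℂ) := by
    intro t ht
    rw [Set.uIcc_of_le (by norm_num : (0:ℝ) ≤ 1)] at ht
    rw [show ((c:ℂ) - 1) = ((c - 1 : ℝ) : ℂ) by push_cast; ring,
      show (1 - (c:ℂ) - 1) = ((-c : ℝ) : ℂ) by push_cast; ring,
      show (1 - (t:ℂ)) = ((1 - t : ℝ) : ℂ) by push_cast; ring,
      ← Complex.ofReal_cpow ht.1, ← Complex.ofReal_cpow (by linarith [ht.2]),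
      ← Complex.ofReal_mul]
  have := Complex.betaIntegral c (1 - c)
  rw [Complex.betaIntegral] at hB
  rw [intervalIntegral.integral_congr heq] at hB
  rw [intervalIntegral.integral_ofReal] at hB
  exact_mod_cast hB

open Set in
lemma mellin_one_add {c : ℝ} (hc0 : 0 < c) (hc1 : c < 1) :
    ∫ v in Set.Ioi (0:ℝ), v ^ (c - 1) / (1 + v) = π / Real.sin (π * c) := by
  have himg : (fun v : ℝ => v / (1 + v)) '' Set.Ioi 0 = Set.Ioo 0 1 := by
    ext t
    constructor
    · rintro ⟨v, hv, rfl⟩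
      rw [Set.mem_Ioi] at hv
      constructor
      · positivity
      · rw [div_lt_one (by linarith)]; linarith
    · rintro ⟨ht0, ht1⟩
      refine ⟨t / (1 - t), by rw [Set.mem_Ioi]; exact div_pos ht0 (by linarith), ?_⟩
      have h1t : (1:ℝ) - t ≠ 0 := by linarith
      field_simp
      ring
  have hderiv : ∀ v ∈ Set.Ioi (0:ℝ), HasDerivWithinAt (fun v : ℝ => v / (1 + v))
      (((1 + v) ^ 2)⁻¹) (Set.Ioi 0) v := by
    intro v hv
    rw [Set.mem_Ioi] at hv
    have h : HasDerivAt (fun v : ℝ => v / (1 + v))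
        ((1 * (1 + v) - v * 1) / (1 + v) ^ 2) v :=
      (hasDerivAt_id v).div ((hasDerivAt_id v).const_add 1) (by positivity)
    refine h.hasDerivWithinAt.congr_deriv ?_
    ring
  have hinj : Set.InjOn (fun v : ℝ => v / (1 + v)) (Set.Ioi 0) := by
    intro a ha b hb hab
    rw [Set.mem_Ioi] at ha hb
    field_simp at hab
    linarith
  have hsub := integral_image_eq_integral_abs_deriv_smul (f' := fun v => ((1 + v) ^ 2)⁻¹)
    measurableSet_Ioi hderiv hinj (fun t : ℝ => t ^ (c - 1) * (1 - t) ^ (-c))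
  rw [himg] at hsub
  have h1 : ∫ t in Set.Ioo (0:ℝ) 1, t ^ (c - 1) * (1 - t) ^ (-c) = π / Real.sin (π * c) := by
    rw [← beta01 hc0 hc1, intervalIntegral.integral_of_le (by norm_num : (0:ℝ) ≤ 1),
      integral_Ioc_eq_integral_Ioo]
  rw [hsub] at h1
  rw [← h1]
  refine setIntegral_congr_fun measurableSet_Ioi (fun v hv => ?_) |>.symm
  rw [Set.mem_Ioi] at hv
  have h1v : (0:ℝ) < 1 + v := by linarith
  have e1 : (1 : ℝ) - v / (1 + v) = (1 + v)⁻¹ := by field_simp; ring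
  have e2 : |(((1+v)^2 : ℝ))⁻¹| = (1+v) ^ (-2 : ℝ) := by
    rw [abs_of_pos (by positivity), ← Real.rpow_natCast (1+v) 2, ← Real.rpow_neg h1v.le]
    norm_num
  have e3 : (v / (1+v)) ^ (c-1) = v ^ (c-1) * (1+v) ^ (-(c-1)) := by
    rw [Real.div_rpow hv.le h1v.le, Real.rpow_neg h1v.le, div_eq_mul_inv]
  have e4 : ((1:ℝ) - v/(1+v)) ^ (-c) = (1+v) ^ c := by
    rw [e1, ← Real.rpow_neg_one (1+v), ← Real.rpow_mul h1v.le]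
    norm_num
  rw [smul_eq_mul, e2, e3, e4, div_eq_mul_inv, ← Real.rpow_neg_one (1+v),
    show (-1 : ℝ) = -2 + (-(c-1) + c) by ring, Real.rpow_add h1v, Real.rpow_add h1v]
  ring

open Set in
lemma laplace_cos (x t : ℝ) (ht : 0 < t) :
    ∫ l in Set.Ioi (0:ℝ), Real.exp (-(t * l)) * Real.cos (l * x) = t / (t^2 + x^2) := by
  set z : ℂ := -(t:ℂ) + x * Complex.I with hz
  have hre : z.re = -t := by simp [hz]
  have him : z.im = x := by simp [hz]
  have hz0 : z ≠ 0 := by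
    intro h
    have := congrArg Complex.re h
    rw [hre, Complex.zero_re] at this
    linarith
  have hnormsq : Complex.normSq z = t^2 + x^2 := by
    rw [Complex.normSq_apply, hre, him]; ring
  have hmeas : AEStronglyMeasurable (fun l : ℝ => Complex.exp (z * l))
      (volume.restrict (Set.Ioi 0)) :=
    (Complex.continuous_exp.comp (continuous_const.mul Complex.continuous_ofReal)).aestronglyMeasurable
  have hnorm : ∀ l : ℝ, ‖Complex.exp (z * l)‖ = Real.exp (-t * l) := by
    intro l
    rw [Complex.norm_exp]
    congr 1
    simp [Complex.mul_re, hre]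
  have hint : IntegrableOn (fun l : ℝ => Complex.exp (z * l)) (Set.Ioi 0) := by
    refine (exp_neg_integrableOn_Ioi 0 ht).mono' hmeas
      (Filter.Eventually.of_forall fun l => ?_)
    rw [hnorm l]
  have hderiv : ∀ l : ℝ, HasDerivAt (fun l : ℝ => Complex.exp (z * l) / z)
      (Complex.exp (z * l)) l := by
    intro l
    have h1 : HasDerivAt (fun l : ℝ => z * (l : ℂ)) z l := by
      simpa using (Complex.ofRealCLM.hasDerivAt (x := l)).const_mul z
    have h2 := (h1.cexp).div_const z
    simpa [mul_div_cancel_right₀ _ hz0] using h2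
  have htend : Filter.Tendsto (fun l : ℝ => Complex.exp (z * l) / z) Filter.atTop (nhds 0) := by
    rw [tendsto_zero_iff_norm_tendsto_zero]
    have : (fun l : ℝ => ‖Complex.exp (z * l) / z‖)
        = fun l => Real.exp (-(t * l)) / ‖z‖ := by
      ext l
      rw [norm_div, hnorm l, neg_mul]
    rw [this]
    rw [show (0:ℝ) = 0 / ‖z‖ by simp]
    apply Filter.Tendsto.div_const
    refine Real.tendsto_exp_atBot.comp ?_
    exact Filter.tendsto_neg_atBot_iff.mpr (Filter.Tendsto.const_mul_atTop ht Filter.tendsto_id)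
  have key := integral_Ioi_of_hasDerivAt_of_tendsto
    (f := fun l : ℝ => Complex.exp (z * l) / z) (f' := fun l : ℝ => Complex.exp (z * l))
    (a := 0) (m := 0)
    (((Complex.continuous_exp.comp (continuous_const.mul Complex.continuous_ofReal)).div_const
      z).continuousWithinAt)
    (fun l _ => hderiv l) hint htend
  simp only [Complex.ofReal_zero, mul_zero, Complex.exp_zero, zero_sub] at key
  have hre2 : ∀ l : ℝ, Real.exp (-(t * l)) * Real.cos (l * x) = (Complex.exp (z * l)).re := by
    intro l
    rw [Complex.exp_re]
    congr 1
    · congr 1; simp [Complex.mul_re, hre]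
    · congr 1; simp [Complex.mul_im, him]; ring
  calc ∫ l in Set.Ioi (0:ℝ), Real.exp (-(t * l)) * Real.cos (l * x)
      = ∫ l in Set.Ioi (0:ℝ), (Complex.exp (z * l)).re := by
        exact setIntegral_congr_fun measurableSet_Ioi fun l _ => hre2 l
    _ = (∫ l in Set.Ioi (0:ℝ), Complex.exp (z * l)).re := by
        rw [← RCLike.re_to_complex, ← integral_re hint]
        rfl
    _ = t / (t^2 + x^2) := by
        rw [key, Complex.neg_re, Complex.div_re]
        simp [hre, hnormsq]
        field_simp

open Set in
lemma exp_cos_int (x t : ℝ) (ht : 0 < t) :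
    IntegrableOn (fun l : ℝ => Real.exp (-(t * l)) * Real.cos (l * x)) (Set.Ioi 0) := by
  refine (exp_neg_integrableOn_Ioi 0 ht).mono' ?_ (Filter.Eventually.of_forall fun l => ?_)
  · exact ((Real.continuous_exp.comp (continuous_const.mul continuous_id).neg).mul
      (Real.continuous_cos.comp (continuous_id.mul continuous_const))).aestronglyMeasurable
  · rw [norm_mul, Real.norm_eq_abs, Real.norm_eq_abs, Real.abs_exp, neg_mul]
    calc Real.exp (-(t * l)) * |Real.cos (l * x)| ≤ Real.exp (-(t*l)) * 1 := by
          exact mul_le_mul_of_nonneg_left (Real.abs_cos_le_one _) (Real.exp_pos _).le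
      _ = Real.exp (-(t*l)) := mul_one _
  
lemma laplace_one_sub_cos (x t : ℝ) (ht : 0 < t) :
    ∫ l in Set.Ioi (0:ℝ), Real.exp (-(t * l)) * (1 - Real.cos (l * x))
      = x^2 / (t * (t^2 + x^2)) := by
  have h1 : ∫ l in Set.Ioi (0:ℝ), Real.exp (-(t * l)) = 1 / t := by
    have := integral_comp_mul_left_Ioi (fun u : ℝ => Real.exp (-u)) 0 ht
    simp only [mul_zero, integral_exp_neg_Ioi, neg_zero, Real.exp_zero, smul_eq_mul,
      mul_one] at this
    rw [this, one_div]
  have hint1 : IntegrableOn (fun l : ℝ => Real.exp (-(t * l))) (Set.Ioi 0) := by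
    simpa [neg_mul] using exp_neg_integrableOn_Ioi 0 ht
  have := integral_sub hint1 (exp_cos_int x t ht)
  simp only [mul_sub, mul_one]
  rw [integral_sub hint1 (exp_cos_int x t ht), h1, laplace_cos x t ht]
  have h2 : t^2 + x^2 > 0 := by positivity
  field_simp
  ring

open Set in
lemma one_sub_cos_le (y : ℝ) : 1 - Real.cos y ≤ y^2 / 2 := by
  nlinarith [Real.one_sub_sq_div_two_le_cos (x := y)]

lemma one_sub_cos_nonneg (y : ℝ) : 0 ≤ 1 - Real.cos y := by
  nlinarith [Real.cos_le_one y]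

lemma integrand_meas (x : ℝ) {α : ℝ} (hα : 0 ≤ α) :
    Measurable (fun l : ℝ => (1 - Real.cos (l * x)) / l ^ α) := by
  apply Measurable.div
  · exact (measurable_const.sub ((measurable_id.mul_const x).cos))
  · exact (Real.continuous_rpow_const hα).measurable

lemma integrand_integrable {α : ℝ} (hα : α ∈ Set.Ioo (1:ℝ) 2) (x : ℝ) :
    IntegrableOn (fun l : ℝ => (1 - Real.cos (l * x)) / l ^ α) (Set.Ioi 0) := by
  obtain ⟨hα1, hα2⟩ := hα
  rw [show Set.Ioi (0:ℝ) = Set.Ioc 0 1 ∪ Set.Ioi 1 from (Set.Ioc_union_Ioi_eq_Ioi zero_le_one).symm]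
  refine IntegrableOn.union ?_ ?_
  · -- bounded by x^2/2 on Ioc 0 1
    refine Measure.integrableOn_of_bounded (M := x^2/2) (by simp) 
      (integrand_meas x (by linarith : (0:ℝ) ≤ α)).aestronglyMeasurable ?_
    refine (ae_restrict_iff' measurableSet_Ioc).mpr (Filter.Eventually.of_forall fun l hl => ?_)
    obtain ⟨hl0, hl1⟩ := hl
    rw [Real.norm_eq_abs, abs_div, abs_of_nonneg (one_sub_cos_nonneg _),
      abs_of_pos (Real.rpow_pos_of_pos hl0 α), div_le_iff₀ (Real.rpow_pos_of_pos hl0 α)]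
    calc 1 - Real.cos (l * x) ≤ (l*x)^2 / 2 := one_sub_cos_le _
      _ = x^2/2 * l^2 := by ring
      _ ≤ x^2/2 * l^α := by
          refine mul_le_mul_of_nonneg_left ?_ (by positivity)
          rw [← Real.rpow_natCast l 2]
          exact Real.rpow_le_rpow_of_exponent_ge hl0 hl1 (by norm_num; linarith)
  · -- dominated by 2 * l^(-α) on Ioi 1
    have hint : IntegrableOn (fun l : ℝ => 2 * l ^ (-α)) (Set.Ioi 1) :=
      (integrableOn_Ioi_rpow_of_lt (by linarith) one_pos).const_mul 2
    refine hint.mono' (integrand_meas x (by linarith : (0:ℝ) ≤ α)).aestronglyMeasurable ?_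
    refine (ae_restrict_iff' measurableSet_Ioi).mpr (Filter.Eventually.of_forall fun l hl => ?_)
    rw [Set.mem_Ioi] at hl
    have hl0 : (0:ℝ) < l := by linarith
    rw [Real.norm_eq_abs, abs_div, abs_of_nonneg (one_sub_cos_nonneg _),
      abs_of_pos (Real.rpow_pos_of_pos hl0 α), div_le_iff₀ (Real.rpow_pos_of_pos hl0 α),
      mul_assoc, ← Real.rpow_add hl0]
    simp only [neg_add_cancel, Real.rpow_zero, mul_one]
    nlinarith [Real.neg_one_le_cos (l * x)]

lemma rpow_exp_int {a r : ℝ} (ha : 0 < a) (hr : 0 < r) :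
    IntegrableOn (fun s : ℝ => s ^ (a - 1) * Real.exp (-(r * s))) (Set.Ioi 0) := by
  have h := Real.GammaIntegral_convergent ha
  rw [← mul_zero r, ← integrableOn_Ioi_comp_mul_left_iff _ _ hr] at h
  refine IntegrableOn.congr_fun (h.const_mul (r ^ (a-1))⁻¹) (fun s hs => ?_) measurableSet_Ioi
  rw [Set.mem_Ioi] at hs
  show (r ^ (a-1))⁻¹ * (Real.exp (-(r * s)) * (r * s) ^ (a - 1)) = _
  rw [Real.mul_rpow hr.le hs.le]
  field_simp [(Real.rpow_pos_of_pos hr (a-1)).ne']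

open Set in
/-- For `α ∈ (1,2)` and every `x : ℝ`,
`∫₀^∞ (1 − cos(λx))/λ^α dλ = −Γ(1 − α)·sin(πα/2)·|x|^{α−1}`.
This gives the renormalized zero resolvent `h(x) ∝ |x|^{α−1}` of the symmetric
strictly `α`-stable process. -/
theorem integral_one_sub_cos_rpow (α : ℝ) (hα : α ∈ Set.Ioo (1 : ℝ) 2) (x : ℝ) :
    ∫ l in Set.Ioi (0 : ℝ), (1 - Real.cos (l * x)) / l ^ α
      = -Real.Gamma (1 - α) * Real.sin (π * α / 2) * |x| ^ (α - 1) := by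
  obtain ⟨hα1, hα2⟩ := hα
  rcases eq_or_ne x 0 with rfl | hx
  · rw [abs_zero, Real.zero_rpow (by intro h; rw [sub_eq_zero] at h; linarith)]
    simp
  have hx2 : (0:ℝ) < x^2 := by positivity
  set Γα := Real.Gamma α with hΓdef
  have hΓ : 0 < Γα := Real.Gamma_pos_of_pos (by linarith)
  set f : ℝ → ℝ → ℝ := fun l t => (1 - Real.cos (l*x)) * (t^(α-1) * Real.exp (-(l*t)))
    with hfdef
  set μ := volume.restrict (Set.Ioi (0:ℝ)) with hμdef
  -- Step A
  have hA : ∀ l ∈ Set.Ioi (0:ℝ), (1 - Real.cos (l*x))/l^α = Γα⁻¹ * ∫ t, f l t ∂μ := by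
    intro l hl
    rw [Set.mem_Ioi] at hl
    have : ∫ t, f l t ∂μ = (1 - Real.cos (l*x)) * ((1/l)^α * Γα) := by
      rw [hμdef]
      rw [MeasureTheory.integral_const_mul]
      rw [Real.integral_rpow_mul_exp_neg_mul_Ioi (by linarith : (0:ℝ) < α) hl]
    rw [this, one_div, Real.inv_rpow hl.le]
    field_simp [(Real.rpow_pos_of_pos hl α).ne']
  -- measurability on the product
  have hfm : AEStronglyMeasurable (fun p : ℝ × ℝ => f p.1 p.2) (μ.prod μ) := by
    have : Measurable (fun p : ℝ × ℝ => f p.1 p.2) := by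
      refine (measurable_const.sub ((measurable_fst.mul_const x).cos)).mul ?_
      exact ((Real.continuous_rpow_const (by linarith : (0:ℝ) ≤ α - 1)).measurable.comp
        measurable_snd).mul ((measurable_fst.mul measurable_snd).neg.exp)
    exact this.aestronglyMeasurable
  -- integrability on the product
  have hfnonneg : ∀ l, ∀ t ∈ Set.Ioi (0:ℝ), 0 ≤ f l t := by
    intro l t ht
    rw [Set.mem_Ioi] at ht
    have := one_sub_cos_nonneg (l*x)
    have : (0:ℝ) ≤ t^(α-1) := (Real.rpow_pos_of_pos ht _).le
    positivity
  have hint : Integrable (Function.uncurry f) (μ.prod μ) := by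
    rw [Function.uncurry_def, integrable_prod_iff hfm]
    constructor
    · filter_upwards [ae_restrict_mem measurableSet_Ioi] with l hl
      rw [Set.mem_Ioi] at hl
      exact ((rpow_exp_int (by linarith : (0:ℝ) < α) hl).const_mul _)
    · have hg : Integrable (fun l => Γα * ((1 - Real.cos (l*x))/l^α)) μ :=
        (integrand_integrable ⟨hα1, hα2⟩ x).const_mul Γα
      refine hg.congr ?_
      filter_upwards [ae_restrict_mem measurableSet_Ioi] with l hl
      have h1 := hA l hl
      rw [Set.mem_Ioi] at hl
      have : ∫ t, ‖f l t‖ ∂μ = ∫ t, f l t ∂μ := by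
        rw [hμdef]
        refine setIntegral_congr_fun measurableSet_Ioi (fun t ht => ?_)
        exact Real.norm_of_nonneg (hfnonneg l t ht)
      rw [← this] at h1
      field_simp at h1 ⊢
      linarith [h1]
  -- Fubini
  have hswap := integral_integral_swap hint
  -- Step C : inner integral over l
  have hC : ∀ t ∈ Set.Ioi (0:ℝ), ∫ l, f l t ∂μ = t^(α-2) * (x^2/(t^2+x^2)) := by
    intro t ht
    rw [Set.mem_Ioi] at ht
    have : ∫ l, f l t ∂μ = t^(α-1) * ∫ l in Set.Ioi (0:ℝ),
        Real.exp (-(t*l)) * (1 - Real.cos (l*x)) := by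
      rw [hμdef, ← MeasureTheory.integral_const_mul]
      refine setIntegral_congr_fun measurableSet_Ioi (fun l hl => ?_)
      rw [hfdef]
      simp only
      rw [mul_comm t l]
      ring
    rw [this, laplace_one_sub_cos x t ht,
      show α - 1 = (α - 2) + 1 by ring, Real.rpow_add_one ht.ne']
    have : t^2 + x^2 > 0 := by positivity
    field_simp
  -- Step D : the t-integral
  set c : ℝ := (α - 1)/2 with hcdef
  have hc0 : 0 < c := by rw [hcdef]; linarith
  have hc1 : c < 1 := by rw [hcdef]; linarith
  have hb : (0:ℝ) < |x| := abs_pos.mpr hx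
  have hD1 : ∫ u in Set.Ioi (0:ℝ), u^(α-2)/(1+u^2) = π / (2 * Real.sin (π * c)) := by
    have hcomp := integral_comp_rpow_Ioi (fun v => v^(c-1)/(1+v)) (p := 2) two_ne_zero
    rw [mellin_one_add hc0 hc1] at hcomp
    have heq : ∀ u ∈ Set.Ioi (0:ℝ),
        (|(2:ℝ)| * u^((2:ℝ)-1)) • ((u^(2:ℝ))^(c-1)/(1+u^(2:ℝ)))
          = 2 * (u^(α-2)/(1+u^2)) := by
      intro u hu
      rw [Set.mem_Ioi] at hu
      have h1 : (u^(2:ℝ)) = u^2 := by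
        rw [← Real.rpow_natCast u 2]; norm_num
      have h2 : (u^(2:ℝ))^(c-1) = u^(α-3) := by
        rw [← Real.rpow_mul hu.le]
        congr 1
        rw [hcdef]; ring
      have h3 : u * u^(α-3) = u^(α-2) := by
        rw [show α-2 = 1+(α-3) by ring, Real.rpow_add hu, Real.rpow_one]
      rw [smul_eq_mul, abs_two, h2, show (2:ℝ)-1 = 1 by norm_num, Real.rpow_one, h1, ← h3]
      ring
    rw [setIntegral_congr_fun measurableSet_Ioi heq] at hcomp
    rw [MeasureTheory.integral_const_mul] at hcomp
    have hsin : 0 < Real.sin (π * c) := by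
      apply Real.sin_pos_of_pos_of_lt_pi
      · positivity
      · rw [hcdef]
        nlinarith [Real.pi_pos]
    field_simp at hcomp ⊢
    linarith
  have hD : ∫ t in Set.Ioi (0:ℝ), t^(α-2) * (x^2/(t^2+x^2))
      = |x|^(α-1) * (π / (2 * Real.sin (π * c))) := by
    have hscale := integral_comp_mul_left_Ioi
      (fun t => t^(α-2) * (x^2/(t^2+x^2))) 0 hb
    rw [mul_zero] at hscale
    have heq : ∀ u ∈ Set.Ioi (0:ℝ),
        (fun t => t^(α-2) * (x^2/(t^2+x^2))) (|x| * u)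
          = |x|^(α-2) * (u^(α-2)/(1+u^2)) := by
      intro u hu
      rw [Set.mem_Ioi] at hu
      simp only
      rw [Real.mul_rpow (abs_nonneg x) hu.le]
      have hxx : (|x| * u)^2 + x^2 = x^2 * (1 + u^2) := by
        rw [mul_pow, sq_abs]; ring
      rw [hxx]
      rw [show x^2/(x^2*(1+u^2)) = 1/(1+u^2) by
        rw [div_eq_div_iff (by positivity) (by positivity)]; ring]
      ring
    rw [setIntegral_congr_fun measurableSet_Ioi heq, MeasureTheory.integral_const_mul,
      hD1] at hscale
    rw [smul_eq_mul] at hscale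
    have hres : ∫ t in Set.Ioi (0:ℝ), t^(α-2) * (x^2/(t^2+x^2))
        = |x| * (|x|^(α-2) * (π / (2 * Real.sin (π * c)))) := by
      rw [hscale, ← mul_assoc, mul_inv_cancel₀ hb.ne', one_mul]
    rw [hres, show α - 1 = 1 + (α - 2) by ring, Real.rpow_add hb, Real.rpow_one]
    ring
  -- assemble
  have hmain : ∫ l in Set.Ioi (0 : ℝ), (1 - Real.cos (l * x)) / l ^ α
      = Γα⁻¹ * (|x|^(α-1) * (π / (2 * Real.sin (π * c)))) := by
    calc ∫ l in Set.Ioi (0 : ℝ), (1 - Real.cos (l * x)) / l ^ α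
        = ∫ l, Γα⁻¹ * ∫ t, f l t ∂μ ∂μ := by
          rw [hμdef]
          exact setIntegral_congr_fun measurableSet_Ioi hA
      _ = Γα⁻¹ * ∫ l, ∫ t, f l t ∂μ ∂μ := MeasureTheory.integral_const_mul _ _
      _ = Γα⁻¹ * ∫ t, ∫ l, f l t ∂μ ∂μ := by rw [hswap]
      _ = Γα⁻¹ * ∫ t in Set.Ioi (0:ℝ), t^(α-2) * (x^2/(t^2+x^2)) := by
          congr 1
          rw [hμdef]
          exact setIntegral_congr_fun measurableSet_Ioi hC
      _ = Γα⁻¹ * (|x|^(α-1) * (π / (2 * Real.sin (π * c)))) := by rw [hD]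
  rw [hmain]
  have hsin : Real.sin (π * c) = -Real.cos (π*α/2) := by
    rw [hcdef, show π*((α-1)/2) = π*α/2 - π/2 by ring, Real.sin_sub_pi_div_two]
  have hs1 : 0 < Real.sin (π*α/2) :=
    Real.sin_pos_of_pos_of_lt_pi (by nlinarith [Real.pi_pos]) (by nlinarith [Real.pi_pos])
  have hc2 : Real.cos (π*α/2) < 0 :=
    Real.cos_neg_of_pi_div_two_lt_of_lt (by nlinarith [Real.pi_pos]) (by nlinarith [Real.pi_pos])
  have hsin2 : Real.sin (π*α) = 2 * Real.sin (π*α/2) * Real.cos (π*α/2) := by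
    have h := Real.sin_two_mul (π*α/2)
    rw [show 2*(π*α/2) = π*α by ring] at h
    exact h
  have hsinne : Real.sin (π*α) ≠ 0 := by
    rw [hsin2]
    exact ne_of_lt (by nlinarith)
  have key : Γα * Real.Gamma (1-α) * Real.sin (π*α) = π := by
    rw [hΓdef, Real.Gamma_mul_Gamma_one_sub α]
    field_simp
  rw [hsin2] at key
  set sa := Real.sin (π*α/2) with hsa
  set ca := Real.cos (π*α/2) with hca
  have hconst : Γα⁻¹ * (π/(2 * -ca)) = -Real.Gamma (1-α) * sa := by
    rw [← key]
    field_simp [hΓ.ne', hc2.ne]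
  rw [hsin, ← hconst]
  ring
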